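/- Let d ≥ 4 and let G be a d-regular graph containing no 4-cycle. Let T be a minimum edge-cut of G that is not trivial, and let G₁ be a connected component of G \ T. Then |V(G₁)| ≥ d + 4. -/

import Mathlib

def HasC4 {V : Type*} (G : SimpleGraph V) : Prop :=
  ∃ a b c d : V, a ≠ b ∧ a ≠ c ∧ a ≠ d ∧ b ≠ c ∧ b ≠ d ∧ c ≠ d ∧
    G.Adj a b ∧ G.Adj b c ∧ G.Adj c d ∧ G.Adj d a

/-- `T` is an edge-cut of `G`: a set of edges whose deletion disconnects `G`. -/
def IsEdgeCut {V : Type*} (G : SimpleGraph V) (T : Finset (Sym2 V)) : Prop :=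
  ↑T ⊆ G.edgeSet ∧ ¬ (G.deleteEdges ↑T).Connected

/-- `T` is a minimum edge-cut of `G`. -/
def IsMinEdgeCut {V : Type*} (G : SimpleGraph V) (T : Finset (Sym2 V)) : Prop :=
  IsEdgeCut G T ∧ ∀ T' : Finset (Sym2 V), IsEdgeCut G T' → T.card ≤ T'.card

/-- `T` is a trivial edge-cut: the set of all edges incident with some vertex. -/
def IsTrivialEdgeCut {V : Type*} (G : SimpleGraph V) (T : Finset (Sym2 V)) : Prop :=
  ∃ v : V, (↑T : Set (Sym2 V)) = {e ∈ G.edgeSet | v ∈ e}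

private lemma reach_isolated {V : Type*} {H : SimpleGraph V} {v u : V}
    (h : ∀ w, ¬ H.Adj v w) (hr : H.Reachable v u) : v = u := by
  obtain ⟨p⟩ := hr
  cases p with
  | nil => rfl
  | cons h' _ => exact absurd h' (h _)

private lemma arith_int (d n S : ℤ) (hd : 4 ≤ d) (hn2 : 2 ≤ n) (hn : n ≤ d + 3)
    (hS : d * n ≤ S + d) (hq : S ^ 2 ≤ n * (n * (n - 1) + S)) : False := by
  have h2 : (0:ℤ) ≤ (n - 2) * (d + 3 - n) := mul_nonneg (by linarith) (by linarith)
  have hd2 : (0:ℤ) ≤ d^2 - 2*d - 5 := by nlinarith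
  have hpos : 0 < d^2*(n-1) - d*n - n^2 := by
    nlinarith [mul_nonneg (by linarith : (0:ℤ) ≤ n - 2) hd2]
  have k1 : n^2*(n-1) < (d*(n-1))*((d*(n-1)) - n) := by
    nlinarith [mul_pos (by linarith : (0:ℤ) < n - 1) hpos]
  have ht : (0:ℤ) ≤ S - d*(n-1) := by linarith
  have ht2 : (0:ℤ) ≤ S + d*(n-1) - n := by nlinarith
  have k2 : (d*(n-1))*((d*(n-1)) - n) ≤ S^2 - n*S := by nlinarith [mul_nonneg ht ht2]
  nlinarith [k1, k2, hq]

private lemma arith_contra (d n S : ℕ) (hd : 4 ≤ d) (hn2 : 2 ≤ n) (hn : n ≤ d + 3)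
    (hS : d * n ≤ S + d) (hq : S ^ 2 ≤ n * (n * (n - 1) + S)) : False := by
  have h1 : 1 ≤ n := by omega
  refine arith_int (d : ℤ) (n : ℤ) (S : ℤ) (by exact_mod_cast hd) (by exact_mod_cast hn2)
    (by exact_mod_cast hn) (by exact_mod_cast hS) ?_
  have := hq
  zify [h1] at this
  convert this using 2

private lemma two_mul_choose_two (k : ℕ) : k * (k - 1) = 2 * k.choose 2 := by
  cases k with
  | zero => rfl
  | succ m =>
    rw [Nat.choose_two_right]
    have he : (2 : ℕ) ∣ (m + 1) * ((m + 1) - 1) := by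
      have : Even ((m + 1) * m) := by
        simpa [Nat.mul_comm] using (Nat.even_mul_succ_self m)
      simpa using this.two_dvd
    rw [Nat.mul_div_cancel' he]

private lemma sq_eq (k : ℕ) : k ^ 2 = k * (k - 1) + k := by
  cases k with
  | zero => rfl
  | succ m =>
    simp only [pow_two, Nat.succ_sub_one]
    ring

private lemma walk_closed {V : Type*} {H : SimpleGraph V} {P : V → Prop}
    (hcl : ∀ ⦃a b⦄, H.Adj a b → P a → P b) : ∀ {x y : V}, H.Walk x y → P x → P y := by
  intro x y p
  induction p with
  | nil => exact id
  | cons h _ ih => exact fun hx => ih (hcl h hx)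

/-- Every connected component of `G \ T`, for a nontrivial minimum edge-cut `T` of a
`d`-regular C₄-free graph with `d ≥ 4`, has at least `d + 4` vertices. -/
theorem stmt5 {V : Type*} [Fintype V] (G : SimpleGraph V) [DecidableRel G.Adj]
    (d : ℕ) (hd : 4 ≤ d) (hreg : G.IsRegularOfDegree d) (hC4 : ¬ HasC4 G)
    (hconn : G.Connected)
    (T : Finset (Sym2 V)) (hmin : IsMinEdgeCut G T) (hnt : ¬ IsTrivialEdgeCut G T)
    (c : (G.deleteEdges ↑T).ConnectedComponent) :
    d + 4 ≤ c.supp.ncard := by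
  classical
  obtain ⟨⟨hTsub, hTdis⟩, hTmin⟩ := hmin
  have hne : Nonempty V := hconn.nonempty
  -- two vertices not reachable in the deleted graph
  have hpre : ¬ (G.deleteEdges (↑T : Set (Sym2 V))).Preconnected := fun h => hTdis ⟨h⟩
  rw [SimpleGraph.Preconnected] at hpre
  push_neg at hpre
  obtain ⟨u₀, w₀, hur⟩ := hpre
  have hu₀w₀ : u₀ ≠ w₀ := fun h => hur (h ▸ SimpleGraph.Reachable.refl _)
  -- `|T| ≤ d` via the trivial cut at `u₀`
  have hTd : T.card ≤ d := by
    have hcut : IsEdgeCut G (G.incidenceFinset u₀) := by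
      constructor
      · intro e he
        simp only [Finset.coe_sort_coe, Finset.mem_coe, SimpleGraph.mem_incidenceFinset] at he
        exact G.incidenceSet_subset u₀ he
      · intro hc
        have hiso : ∀ w, ¬ (G.deleteEdges (↑(G.incidenceFinset u₀) : Set (Sym2 V))).Adj u₀ w := by
          intro w hw
          rw [SimpleGraph.deleteEdges_adj] at hw
          exact hw.2 (by simp [SimpleGraph.mem_incidenceFinset, SimpleGraph.mem_incidenceSet, hw.1])
        exact hu₀w₀ (reach_isolated hiso (hc.preconnected u₀ w₀))
    have := hTmin _ hcut
    rwa [SimpleGraph.card_incidenceFinset_eq_degree, hreg u₀] at this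
  -- the component's vertex set as a Finset
  set A : Finset V := (Set.toFinite c.supp).toFinset with hA
  have hmemA : ∀ v, v ∈ A ↔ (G.deleteEdges (↑T : Set (Sym2 V))).connectedComponentMk v = c := by
    intro v
    rw [hA, Set.Finite.mem_toFinset]
    exact c.mem_supp_iff v
  -- the edge boundary of `A`
  set B : Finset (Sym2 V) :=
    A.biUnion (fun v => ((G.neighborFinset v) \ A).image (fun w => s(v, w))) with hB
  have hmemB : ∀ e, e ∈ B ↔ ∃ v ∈ A, ∃ w, (G.Adj v w ∧ w ∉ A) ∧ e = s(v, w) := by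
    intro e
    simp only [hB, Finset.mem_biUnion, Finset.mem_image, Finset.mem_sdiff,
      SimpleGraph.mem_neighborFinset]
    constructor
    · rintro ⟨v, hv, w, ⟨hw1, hw2⟩, rfl⟩; exact ⟨v, hv, w, ⟨hw1, hw2⟩, rfl⟩
    · rintro ⟨v, hv, w, ⟨hw1, hw2⟩, rfl⟩; exact ⟨v, hv, w, ⟨hw1, hw2⟩, rfl⟩
  -- `B ⊆ T`
  have hBT : B ⊆ T := by
    intro e he
    rw [hmemB] at he
    obtain ⟨v, hv, w, ⟨hadj, hwA⟩, rfl⟩ := he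
    by_contra heT
    have hadj' : (G.deleteEdges (↑T : Set (Sym2 V))).Adj v w :=
      SimpleGraph.deleteEdges_adj.mpr ⟨hadj, by simpa using heT⟩
    apply hwA
    rw [hmemA]
    rw [← (hmemA v).mp hv]
    exact (SimpleGraph.ConnectedComponent.eq).mpr hadj'.symm.reachable
  -- walks in `G.deleteEdges ↑B` starting in `A` stay in `A`
  have hwalk : ∀ (x y : V), (G.deleteEdges (↑B : Set (Sym2 V))).Walk x y → x ∈ A → y ∈ A := by
    intro x y p
    refine walk_closed (fun a b hab ha => ?_) p
    rw [SimpleGraph.deleteEdges_adj] at hab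
    by_contra hbA
    exact hab.2 (by
      rw [Finset.mem_coe, hmemB]
      exact ⟨a, ha, b, ⟨hab.1, hbA⟩, rfl⟩)
  -- a vertex inside and a vertex outside `A`
  have hex : ∃ v, (G.deleteEdges (↑T : Set (Sym2 V))).connectedComponentMk v = c :=
    c.ind fun v => ⟨v, rfl⟩
  obtain ⟨u, hu⟩ := hex
  have huA : u ∈ A := (hmemA u).mpr hu
  have hout : ∃ w, w ∉ A := by
    by_cases h0 : u₀ ∈ A
    · refine ⟨w₀, fun h1 => ?_⟩
      rw [hmemA] at h0 h1
      exact hur ((SimpleGraph.ConnectedComponent.eq).mp (h0.trans h1.symm))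
    · exact ⟨u₀, h0⟩
  obtain ⟨w, hwA⟩ := hout
  -- `B` is an edge cut
  have hBcut : IsEdgeCut G B := by
    constructor
    · exact fun e he => hTsub (hBT (by simpa using he))
    · intro hc
      obtain ⟨p⟩ := hc.preconnected u w
      exact hwA (hwalk u w p huA)
  -- hence `T = B`
  have hTB : T = B := (Finset.eq_of_subset_of_card_le hBT (hTmin B hBcut)).symm
  have hBd : B.card ≤ d := hTB ▸ hTd
  -- boundary counting
  have hcardB : B.card = ∑ v ∈ A, ((G.neighborFinset v) \ A).card := by
    have hdisj : ∀ v ∈ A, ∀ v' ∈ A, v ≠ v' →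
        Disjoint (((G.neighborFinset v) \ A).image (fun w => s(v, w)))
          (((G.neighborFinset v') \ A).image (fun w => s(v', w))) := by
      intro v hv v' hv' hvv'
      rw [Finset.disjoint_left]
      rintro e he he'
      simp only [Finset.mem_image, Finset.mem_sdiff, SimpleGraph.mem_neighborFinset] at he he'
      obtain ⟨a, ⟨ha1, ha2⟩, rfl⟩ := he
      obtain ⟨b, ⟨hb1, hb2⟩, hbe⟩ := he'
      rw [Sym2.eq_iff] at hbe
      rcases hbe with ⟨h1, h2⟩ | ⟨h1, h2⟩
      · exact hvv' h1.symm
      · exact ha2 (h1 ▸ hv')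
    rw [hB, Finset.card_biUnion hdisj]
    refine Finset.sum_congr rfl fun v hv => Finset.card_image_of_injOn ?_
    intro a _ b _ hab
    exact Sym2.congr_right.mp hab
  -- inner degrees
  set x : V → ℕ := fun v => ((G.neighborFinset v) ∩ A).card with hx
  have hdegsplit : ∀ v ∈ A, ((G.neighborFinset v) \ A).card + x v = d := by
    intro v _
    rw [hx, Finset.card_sdiff_add_card_inter, G.card_neighborFinset_eq_degree, hreg v]
  set S : ℕ := ∑ v ∈ A, x v with hSdef
  set n : ℕ := A.card with hn
  have hsum : B.card + S = n * d := by
    rw [hcardB, hSdef, ← Finset.sum_add_distrib]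
    rw [Finset.sum_congr rfl hdegsplit, Finset.sum_const, smul_eq_mul, hn]
  -- the goal in terms of `n`
  have hgoal : c.supp.ncard = n := by
    rw [hn, hA, Set.ncard_eq_toFinset_card c.supp (Set.toFinite c.supp)]
  rw [hgoal]
  have hn1 : 1 ≤ n := by
    rw [hn]
    exact Finset.card_pos.mpr ⟨u, huA⟩
  -- the case `n = 1` contradicts nontriviality
  have hn2 : 2 ≤ n := by
    rcases Nat.lt_or_ge n 2 with h | h
    · exfalso
      have h1 : n = 1 := le_antisymm (by omega) hn1
      obtain ⟨v, hv⟩ := Finset.card_eq_one.mp (hn ▸ h1)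
      apply hnt
      refine ⟨v, ?_⟩
      rw [hTB]
      ext e
      simp only [Finset.coe_sort_coe, Finset.mem_coe, Set.mem_setOf_eq]
      rw [hmemB]
      constructor
      · rintro ⟨v', hv', w', ⟨hadj, _⟩, rfl⟩
        have : v' = v := by simpa [hv] using hv'
        subst this
        exact ⟨hadj, Sym2.mem_mk_left _ _⟩
      · rintro ⟨hee, hve⟩
        induction e with
        | _ a b =>
          rw [SimpleGraph.mem_edgeSet] at hee
          rw [Sym2.mem_iff] at hve
          have hvA : v ∈ A := by simp [hv]
          rcases hve with rfl | rfl
          · exact ⟨v, hvA, b, ⟨hee, by simp [hv, hee.ne']⟩, rfl⟩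
          · exact ⟨v, hvA, a, ⟨hee.symm, by simp [hv, hee.ne]⟩, Sym2.eq_swap⟩
    · exact h
  -- C4-free double counting
  have hpairs : ∑ v ∈ A, (x v).choose 2 ≤ n.choose 2 := by
    have key := Finset.card_le_card_of_injOn
      (s := A.sigma (fun v => ((G.neighborFinset v) ∩ A).powersetCard 2))
      (t := A.powersetCard 2) (fun p => p.2) ?_ ?_
    · rw [Finset.card_sigma, Finset.card_powersetCard, ← hn] at key
      refine le_trans (le_of_eq ?_) key
      exact Finset.sum_congr rfl fun v _ => (Finset.card_powersetCard 2 _).symm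
    · rintro ⟨v, p⟩ hp
      rw [Finset.mem_coe, Finset.mem_sigma] at hp
      rw [Finset.mem_coe, Finset.mem_powersetCard]
      have h2 := Finset.mem_powersetCard.mp hp.2
      exact ⟨h2.1.trans Finset.inter_subset_right, h2.2⟩
    · rintro ⟨v, p⟩ hp ⟨v', p'⟩ hp' heq
      simp only [Finset.coe_sigma, Set.mem_sigma_iff, Finset.mem_coe] at hp hp'
      simp only at heq
      subst heq
      obtain ⟨hvA, hpmem⟩ := hp
      obtain ⟨hv'A, hp'mem⟩ := hp'
      rw [Finset.mem_powersetCard] at hpmem hp'mem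
      by_cases hvv' : v = v'
      · subst hvv'; rfl
      · exfalso
        obtain ⟨a, b, hab, rfl⟩ := Finset.card_eq_two.mp hpmem.2
        have ha : a ∈ (G.neighborFinset v) ∩ A := hpmem.1 (by simp)
        have hb : b ∈ (G.neighborFinset v) ∩ A := hpmem.1 (by simp)
        have ha' : a ∈ (G.neighborFinset v') ∩ A := hp'mem.1 (by simp)
        have hb' : b ∈ (G.neighborFinset v') ∩ A := hp'mem.1 (by simp)
        simp only [Finset.mem_inter, SimpleGraph.mem_neighborFinset] at ha hb ha' hb'
        exact hC4 ⟨v, a, v', b, ha.1.ne, hvv', hb.1.ne, ha'.1.ne', hab, hb'.1.ne,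
          ha.1, ha'.1.symm, hb'.1, hb.1.symm⟩
  have hmul : ∑ v ∈ A, x v * (x v - 1) ≤ n * (n - 1) := by
    calc ∑ v ∈ A, x v * (x v - 1) = ∑ v ∈ A, 2 * (x v).choose 2 := by
          exact Finset.sum_congr rfl fun v _ => two_mul_choose_two (x v)
      _ = 2 * ∑ v ∈ A, (x v).choose 2 := by rw [Finset.mul_sum]
      _ ≤ 2 * n.choose 2 := Nat.mul_le_mul_left 2 hpairs
      _ = n * (n - 1) := (two_mul_choose_two n).symm
  have hCS : S ^ 2 ≤ n * ∑ v ∈ A, (x v) ^ 2 := by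
    simpa [hSdef, hn] using sq_sum_le_card_mul_sum_sq (s := A) (f := fun v => (x v : ℕ))
  have hsumsq : ∑ v ∈ A, (x v) ^ 2 = (∑ v ∈ A, x v * (x v - 1)) + S := by
    rw [hSdef, ← Finset.sum_add_distrib]
    exact Finset.sum_congr rfl fun v _ => sq_eq (x v)
  have hq : S ^ 2 ≤ n * (n * (n - 1) + S) := by
    calc S ^ 2 ≤ n * ∑ v ∈ A, (x v) ^ 2 := hCS
      _ = n * ((∑ v ∈ A, x v * (x v - 1)) + S) := by rw [hsumsq]
      _ ≤ n * (n * (n - 1) + S) := by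
          exact Nat.mul_le_mul_left n (Nat.add_le_add_right hmul S)
  have hSd : d * n ≤ S + d := by
    rw [Nat.mul_comm]
    omega
  by_contra hlt
  push_neg at hlt
  exact arith_contra d n S hd hn2 (by omega) hSd hq
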